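/- Let F be a real random variable with F ~ N(μ, σ²) under a probability measure Q, with σ > 0, and let K ∈ ℝ. Then E_Q[(F - K)⁺] = σ(d·N(d) + n(d)) = (μ - K)·N(d) + σ·n(d), where d = (μ - K)/σ, n is the standard normal density and N the standard normal CDF. -/

import Mathlib

open MeasureTheory ProbabilityTheory Real

noncomputable def stdNormalPdf (x : ℝ) : ℝ := (Real.sqrt (2 * π))⁻¹ * exp (-x ^ 2 / 2)

noncomputable def stdNormalCdf (y : ℝ) : ℝ := ∫ x in Set.Iic y, stdNormalPdf x

lemma stdNormalPdf_eq (x : ℝ) :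
    stdNormalPdf x = (Real.sqrt (2 * π))⁻¹ * exp (-(1/2) * x ^ 2) := by
  rw [stdNormalPdf]
  congr 1
  ring_nf

lemma stdNormalPdf_neg (x : ℝ) : stdNormalPdf (-x) = stdNormalPdf x := by
  simp [stdNormalPdf]

lemma integrable_stdNormalPdf : Integrable stdNormalPdf := by
  have h : stdNormalPdf = fun x => (Real.sqrt (2 * π))⁻¹ * exp (-(1/2) * x ^ 2) := by
    funext x; exact stdNormalPdf_eq x
  rw [h]
  exact (integrable_exp_neg_mul_sq (by norm_num : (0:ℝ) < 1/2)).const_mul _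

lemma integrable_mul_stdNormalPdf : Integrable (fun x : ℝ => x * stdNormalPdf x) := by
  have h : (fun x : ℝ => x * stdNormalPdf x)
      = fun x => (Real.sqrt (2 * π))⁻¹ * (x * exp (-(1/2) * x ^ 2)) := by
    funext x; rw [stdNormalPdf_eq]; ring
  rw [h]
  exact (integrable_mul_exp_neg_mul_sq (by norm_num : (0:ℝ) < 1/2)).const_mul _

lemma hasDerivAt_neg_stdNormalPdf (x : ℝ) :
    HasDerivAt (fun y => -stdNormalPdf y) (x * stdNormalPdf x) x := by
  have h1 : HasDerivAt (fun y : ℝ => -y ^ 2 / 2) (-x) x := by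
    have := (hasDerivAt_pow 2 x).neg.div_const 2
    refine this.congr_deriv ?_
    push_cast
    ring
  have h2 := (h1.exp.const_mul ((Real.sqrt (2 * π))⁻¹)).neg
  have heq : (fun y => -stdNormalPdf y)
      = fun y => -((Real.sqrt (2 * π))⁻¹ * exp (-y ^ 2 / 2)) := by
    funext y; rw [stdNormalPdf]
  rw [heq]
  refine h2.congr_deriv ?_
  rw [stdNormalPdf]
  ring

lemma integral_mul_stdNormalPdf_Ioi (c : ℝ) :
    ∫ x in Set.Ioi c, x * stdNormalPdf x = stdNormalPdf c := by
  have hcont : Continuous stdNormalPdf := by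
    unfold stdNormalPdf
    fun_prop
  have htend : Filter.Tendsto (fun y => -stdNormalPdf y) Filter.atTop (nhds 0) := by
    have h1 : Filter.Tendsto (fun y : ℝ => -y ^ 2 / 2) Filter.atTop Filter.atBot := by
      apply Filter.Tendsto.atBot_div_const (by norm_num : (0:ℝ) < 2)
      exact Filter.tendsto_neg_atBot_iff.mpr (Filter.tendsto_pow_atTop (by norm_num))
    have h2 : Filter.Tendsto stdNormalPdf Filter.atTop (nhds 0) := by
      have := (Real.tendsto_exp_atBot.comp h1).const_mul ((Real.sqrt (2 * π))⁻¹)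
      show Filter.Tendsto (fun x => (Real.sqrt (2 * π))⁻¹ * exp (-x ^ 2 / 2)) _ _
      simpa only [mul_zero, Function.comp_def, stdNormalPdf] using this
    simpa using h2.neg
  have key := integral_Ioi_of_hasDerivAt_of_tendsto
    (f := fun y => -stdNormalPdf y) (f' := fun x => x * stdNormalPdf x) (a := c) (m := 0)
    (hcont.neg.continuousWithinAt)
    (fun x _ => hasDerivAt_neg_stdNormalPdf x)
    (integrable_mul_stdNormalPdf.integrableOn)
    htend
  rw [key]
  ring

lemma integral_stdNormalPdf_Ioi (c : ℝ) :
    ∫ x in Set.Ioi c, stdNormalPdf x = stdNormalCdf (-c) := by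
  have h := integral_comp_neg_Iic (-c) stdNormalPdf
  simp only [neg_neg, stdNormalPdf_neg] at h
  rw [stdNormalCdf, h]

theorem bachelier_call_price {Ω : Type*} [MeasurableSpace Ω]
    (Q : Measure Ω) [IsProbabilityMeasure Q]
    (F : Ω → ℝ) (hF : Measurable F)
    (m σ K : ℝ) (hσ : 0 < σ)
    (hlaw : Q.map F = gaussianReal m ((σ ^ 2).toNNReal)) :
    (∫ ω, max (F ω - K) 0 ∂Q)
        = σ * ((m - K) / σ * stdNormalCdf ((m - K) / σ) + stdNormalPdf ((m - K) / σ)) ∧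
    (∫ ω, max (F ω - K) 0 ∂Q)
        = (m - K) * stdNormalCdf ((m - K) / σ) + σ * stdNormalPdf ((m - K) / σ) := by
  have hσ0 : σ ≠ 0 := ne_of_gt hσ
  set v : NNReal := (σ ^ 2).toNNReal with hv_def
  have hv : v ≠ 0 := by
    simp only [hv_def, ne_eq, Real.toNNReal_eq_zero, not_le]
    positivity
  set d : ℝ := (m - K) / σ with hd
  have hσd : σ * d = m - K := by
    rw [hd]; field_simp
  -- Step 1: push to the gaussian law
  have hmeas : AEStronglyMeasurable (fun x : ℝ => max (x - K) 0) (gaussianReal m v) :=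
    ((continuous_id.sub continuous_const).max continuous_const).aestronglyMeasurable
  have hmeas' : AEStronglyMeasurable (fun x : ℝ => max (x - K) 0) (Q.map F) := by
    rw [hlaw]; exact hmeas
  have h1 : (∫ ω, max (F ω - K) 0 ∂Q) = ∫ x, max (x - K) 0 ∂(gaussianReal m v) := by
    rw [← hlaw, integral_map hF.aemeasurable hmeas']
  -- Step 2: write as a Lebesgue integral against the density
  have h2 : (∫ x, max (x - K) 0 ∂(gaussianReal m v))
      = ∫ x, gaussianPDFReal m v x * max (x - K) 0 := by
    rw [gaussianReal_of_var_ne_zero m hv]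
    have hpdf : gaussianPDF m v
        = fun x => (((gaussianPDFReal m v x).toNNReal : NNReal) : ENNReal) := rfl
    rw [hpdf, integral_withDensity_eq_integral_smul
      ((measurable_gaussianPDFReal m v).real_toNNReal) (fun x => max (x - K) 0)]
    congr 1
    funext x
    rw [NNReal.smul_def, Real.coe_toNNReal _ (gaussianPDFReal_nonneg m v x), smul_eq_mul]
  -- pdf at affine point
  have hvv : ((v : NNReal) : ℝ) = σ ^ 2 := Real.coe_toNNReal _ (sq_nonneg σ)
  have hpdfaff : ∀ y : ℝ, gaussianPDFReal m v (σ * y + m) = σ⁻¹ * stdNormalPdf y := by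
    intro y
    rw [gaussianPDFReal, hvv, stdNormalPdf]
    have hsqrt : Real.sqrt (2 * π * σ ^ 2) = Real.sqrt (2 * π) * σ := by
      rw [Real.sqrt_mul (by positivity), Real.sqrt_sq hσ.le]
    have harg : -(σ * y + m - m) ^ 2 / (2 * σ ^ 2) = -y ^ 2 / 2 := by
      field_simp
      ring
    rw [hsqrt, harg, mul_inv]
    ring
  -- Step 3: change of variables x = σ y + m
  have h3 : (∫ x, gaussianPDFReal m v x * max (x - K) 0)
      = σ * ∫ y, gaussianPDFReal m v (σ * y + m) * max (σ * y + m - K) 0 := by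
    have hcm := Measure.integral_comp_mul_left
      (fun t => gaussianPDFReal m v (t + m) * max (t + m - K) 0) σ
    rw [integral_add_right_eq_self (μ := volume)
      (fun x => gaussianPDFReal m v x * max (x - K) 0) m] at hcm
    rw [abs_of_pos (inv_pos.mpr hσ), smul_eq_mul] at hcm
    rw [hcm, ← mul_assoc, mul_inv_cancel₀ hσ0, one_mul]
  -- simplify the pdf inside
  have h4 : (σ * ∫ y, gaussianPDFReal m v (σ * y + m) * max (σ * y + m - K) 0)
      = ∫ y, stdNormalPdf y * max (σ * y + m - K) 0 := by
    have : (fun y => gaussianPDFReal m v (σ * y + m) * max (σ * y + m - K) 0)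
        = fun y => σ⁻¹ * (stdNormalPdf y * max (σ * y + m - K) 0) := by
      funext y; rw [hpdfaff y]; ring
    rw [this, integral_const_mul, ← mul_assoc, mul_inv_cancel₀ hσ0, one_mul]
  -- Step 4: indicator form
  have h5 : (fun y => stdNormalPdf y * max (σ * y + m - K) 0)
      = Set.indicator (Set.Ici (-d)) (fun y => σ * (y * stdNormalPdf y) + (m - K) * stdNormalPdf y) := by
    funext y
    by_cases hy : -d ≤ y
    · rw [Set.indicator_of_mem (Set.mem_Ici.mpr hy)]
      have h0 : 0 ≤ σ * y + m - K := by
        have := mul_le_mul_of_nonneg_left hy hσ.le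
        rw [mul_neg, hσd] at this
        linarith
      rw [max_eq_left h0]
      ring
    · rw [Set.indicator_of_notMem (by simpa using hy)]
      push_neg at hy
      have h0 : σ * y + m - K ≤ 0 := by
        have := mul_le_mul_of_nonneg_left hy.le hσ.le
        rw [mul_neg, hσd] at this
        linarith
      rw [max_eq_right h0]
      ring
  have h6 : (∫ y, stdNormalPdf y * max (σ * y + m - K) 0)
      = σ * stdNormalPdf d + (m - K) * stdNormalCdf d := by
    rw [h5, integral_indicator measurableSet_Ici, integral_Ici_eq_integral_Ioi,
      integral_add ((integrable_mul_stdNormalPdf.const_mul σ).integrableOn)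
        ((integrable_stdNormalPdf.const_mul (m - K)).integrableOn),
      integral_const_mul, integral_const_mul, integral_mul_stdNormalPdf_Ioi,
      integral_stdNormalPdf_Ioi, stdNormalPdf_neg, neg_neg]
  have hA : (∫ ω, max (F ω - K) 0 ∂Q) = σ * stdNormalPdf d + (m - K) * stdNormalCdf d := by
    rw [h1, h2, h3, h4, h6]
  constructor
  · rw [hA, mul_add, ← mul_assoc, hσd]
    ring
  · rw [hA]
    ring
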